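/- If S_1, S_2, S_3 are real skew-symmetric matrices of orders n_1, n_2, n_3 with S_j^T S_j = k_j I for j = 1,2,3, then the Kronecker product S_1 ⊗ S_2 ⊗ S_3 is skew-symmetric and satisfies (S_1 ⊗ S_2 ⊗ S_3)^T (S_1 ⊗ S_2 ⊗ S_3) = k_1 k_2 k_3 I; hence the corresponding oriented graph has optimum skew energy n_1 n_2 n_3 √(k_1 k_2 k_3). -/

import Mathlib

open Matrix Polynomial
open scoped Kronecker

/-- The skew energy: the sum of the norms of the eigenvalues (with multiplicity). -/
noncomputable def skewEnergy {V : Type*} [Fintype V] [DecidableEq V]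
    (S : Matrix V V ℝ) : ℝ :=
  (((S.map Complex.ofReal).charpoly.roots).map (fun z => ‖z‖)).sum

lemma eval_charpoly' {n : Type*} [Fintype n] [DecidableEq n] {R : Type*} [CommRing R]
    (M : Matrix n n R) (μ : R) :
    M.charpoly.eval μ = ((Matrix.diagonal fun _ => μ) - M).det := by
  rw [Matrix.charpoly, ← Polynomial.coe_evalRingHom, RingHom.map_det]
  congr 1
  ext i j
  simp [Matrix.charmatrix_apply, Matrix.diagonal, Matrix.sub_apply, apply_ite]

/-- Each root of the charpoly of `M` with `M * M = -k • 1` squares to `-k`. -/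
lemma root_sq {n : Type*} [Fintype n] [DecidableEq n] [Nonempty n]
    (M : Matrix n n ℂ) (k : ℂ) (hM : M * M = (-k) • 1)
    {μ : ℂ} (hμ : μ ∈ M.charpoly.roots) : μ ^ 2 = -k := by
  have hroot : M.charpoly.eval μ = 0 :=
    (Polynomial.mem_roots (Matrix.charpoly_monic M).ne_zero).1 hμ
  rw [eval_charpoly' M μ] at hroot
  obtain ⟨v, hv, hveq⟩ := (Matrix.exists_mulVec_eq_zero_iff).2 hroot
  have hMv : M.mulVec v = μ • v := by
    have h1 : ((Matrix.diagonal fun _ => μ) - M).mulVec v = 0 := hveq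
    rw [Matrix.sub_mulVec] at h1
    have h2 : (Matrix.diagonal fun _ => μ).mulVec v = μ • v := by
      ext i; simp [Matrix.mulVec_diagonal]
    rw [h2] at h1
    have := sub_eq_zero.1 h1
    exact this.symm
  have hM2v : (M * M).mulVec v = (μ ^ 2) • v := by
    rw [← Matrix.mulVec_mulVec, hMv, Matrix.mulVec_smul, hMv, smul_smul, sq]
  rw [hM, Matrix.smul_mulVec, Matrix.one_mulVec] at hM2v
  obtain ⟨i, hi⟩ := Function.ne_iff.1 hv
  have hco := congrFun hM2v i
  simp only [Pi.smul_apply, smul_eq_mul] at hco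
  exact mul_right_cancel₀ hi hco.symm

theorem kronecker_three_optimum {n₁ n₂ n₃ : ℕ}
    (S₁ : Matrix (Fin n₁) (Fin n₁) ℝ) (S₂ : Matrix (Fin n₂) (Fin n₂) ℝ)
    (S₃ : Matrix (Fin n₃) (Fin n₃) ℝ)
    (h₁ : S₁ᵀ = -S₁) (h₂ : S₂ᵀ = -S₂) (h₃ : S₃ᵀ = -S₃)
    (k₁ k₂ k₃ : ℕ)
    (hk₁ : S₁ᵀ * S₁ = (k₁ : ℝ) • 1) (hk₂ : S₂ᵀ * S₂ = (k₂ : ℝ) • 1)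
    (hk₃ : S₃ᵀ * S₃ = (k₃ : ℝ) • 1) :
    (S₁ ⊗ₖ S₂ ⊗ₖ S₃)ᵀ = -(S₁ ⊗ₖ S₂ ⊗ₖ S₃) ∧
    (S₁ ⊗ₖ S₂ ⊗ₖ S₃)ᵀ * (S₁ ⊗ₖ S₂ ⊗ₖ S₃) = ((k₁ * k₂ * k₃ : ℕ) : ℝ) • 1 ∧
    skewEnergy (S₁ ⊗ₖ S₂ ⊗ₖ S₃) =
      ((n₁ * n₂ * n₃ : ℕ) : ℝ) * Real.sqrt ((k₁ * k₂ * k₃ : ℕ) : ℝ) := by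
  set T := S₁ ⊗ₖ S₂ ⊗ₖ S₃ with hT
  have hTt : Tᵀ = -T := by
    rw [hT, ← Matrix.kroneckerMap_transpose, ← Matrix.kroneckerMap_transpose, h₁, h₂, h₃]
    ext ⟨⟨a, b⟩, c⟩ ⟨⟨d, e⟩, f⟩
    simp only [Matrix.kroneckerMap_apply, Matrix.neg_apply]
    ring
  have hTk : Tᵀ * T = ((k₁ * k₂ * k₃ : ℕ) : ℝ) • 1 := by
    rw [hT, ← Matrix.kroneckerMap_transpose, ← Matrix.kroneckerMap_transpose,
      ← Matrix.mul_kronecker_mul, ← Matrix.mul_kronecker_mul, hk₁, hk₂, hk₃]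
    simp only [Matrix.smul_kronecker, Matrix.kronecker_smul, Matrix.one_kronecker_one,
      smul_smul]
    congr 1
    push_cast
    ring
  refine ⟨hTt, hTk, ?_⟩
  -- skew energy computation
  set K : ℕ := k₁ * k₂ * k₃ with hK
  have hTsq : T * T = (-(K : ℝ)) • 1 := by
    have := hTk
    rw [hTt] at this
    have h' : T * T = -(((K : ℝ)) • 1) := by
      rw [← neg_neg (T * T), ← Matrix.neg_mul, ← this]
    rw [h', neg_smul]
  set M : Matrix ((Fin n₁ × Fin n₂) × Fin n₃) ((Fin n₁ × Fin n₂) × Fin n₃) ℂ :=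
    T.map Complex.ofReal with hM
  have hMsq : M * M = (-(K : ℂ)) • 1 := by
    rw [hM]
    ext i j
    simp only [Matrix.mul_apply, Matrix.map_apply]
    have h1 : (∑ x, ((T i x : ℝ) : ℂ) * ((T x j : ℝ) : ℂ)) = (((T * T) i j : ℝ) : ℂ) := by
      rw [Matrix.mul_apply]
      push_cast
      rfl
    rw [h1, hTsq]
    by_cases h : i = j <;>
      simp [Matrix.smul_apply, Matrix.one_apply, h]
  by_cases hN : Nonempty ((Fin n₁ × Fin n₂) × Fin n₃)
  · have hcard : Fintype.card ((Fin n₁ × Fin n₂) × Fin n₃) = n₁ * n₂ * n₃ := by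
      simp [Fintype.card_prod]
    have hsplits : M.charpoly.roots.card = n₁ * n₂ * n₃ := by
      have hs := IsAlgClosed.splits M.charpoly
      rw [(Polynomial.splits_iff_card_roots).1 hs, Matrix.charpoly_natDegree_eq_dim, hcard]
    have habs : ∀ μ ∈ M.charpoly.roots, ‖μ‖ = Real.sqrt (K : ℝ) := by
      intro μ hμ
      have hsq := root_sq M (K : ℂ) (by rw [hMsq]) hμ
      have h1 : ‖μ‖ ^ 2 = (K : ℝ) := by
        have := congrArg (‖·‖) hsq
        rw [norm_pow] at this
        rw [this]
        simp
      rw [← h1, Real.sqrt_sq (norm_nonneg μ)]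
    have hrepl : M.charpoly.roots.map (fun z => ‖z‖) =
        Multiset.replicate (n₁ * n₂ * n₃) (Real.sqrt (K : ℝ)) := by
      rw [Multiset.eq_replicate]
      constructor
      · rw [Multiset.card_map, hsplits]
      · intro b hb
        obtain ⟨μ, hμ, rfl⟩ := Multiset.mem_map.1 hb
        exact habs μ hμ
    show (M.charpoly.roots.map (fun z => ‖z‖)).sum = _
    rw [hrepl, Multiset.sum_replicate, nsmul_eq_mul]
  · -- empty case: n₁ * n₂ * n₃ = 0
    have h0 : n₁ * n₂ * n₃ = 0 := by
      by_contra h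
      exact hN ⟨⟨⟨0, Nat.pos_of_ne_zero fun h' => h (by simp [h'])⟩,
        ⟨0, Nat.pos_of_ne_zero fun h' => h (by simp [h'])⟩⟩,
        ⟨0, Nat.pos_of_ne_zero fun h' => h (by simp [h'])⟩⟩
    have hE : IsEmpty ((Fin n₁ × Fin n₂) × Fin n₃) := not_nonempty_iff.1 hN
    have hdeg : M.charpoly = 1 := by
      rw [Matrix.charpoly, Matrix.det_isEmpty]
    show (M.charpoly.roots.map (fun z => ‖z‖)).sum = _
    rw [hdeg, Polynomial.roots_one, h0]
    simp
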